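/- Let t ≥ s ≥ 2 be integers. Then every graph G satisfies N(K_{s,t}, G) ≤ ((t−s+1)!/(s!·t!)) · N(S_{t−s+1}, G) · |E(G)|^{s−1}. -/
import Mathlib

open SimpleGraph

/-- The number of induced copies of `F` in `G`. -/
noncomputable def inducedCount {α β : Type*} [Fintype α] [Fintype β]
    (F : SimpleGraph α) (G : SimpleGraph β) : ℕ :=
  Set.ncard {s : Finset β | Nonempty (G.induce (s : Set β) ≃g F)}

noncomputable section StmtAux

namespace StmtAux

set_option linter.unusedSectionVars false
variable {V : Type*} [Fintype V] [DecidableEq V] {G : SimpleGraph V} {n m : ℕ}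

abbrev KK (n m : ℕ) : SimpleGraph (Fin (n+2) ⊕ Fin (n+m+2)) :=
  completeBipartiteGraph (Fin (n+2)) (Fin (n+m+2))

abbrev SS (m : ℕ) : SimpleGraph (Fin 1 ⊕ Fin (m+1)) :=
  completeBipartiteGraph (Fin 1) (Fin (m+1))

variable {W : Finset V} (φ : G.induce (W : Set V) ≃g KK n m)

/-- the vertex of `G` corresponding to a vertex of the abstract `K_{s,t}`. -/
def vert (x : Fin (n+2) ⊕ Fin (n+m+2)) : V := (φ.symm x : V)

lemma vert_mem (x) : vert φ x ∈ W := (φ.symm x).2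

lemma vert_inj : Function.Injective (vert φ) :=
  fun _ _ h => φ.symm.injective (Subtype.ext h)

lemma adj_vert (x y) : G.Adj (vert φ x) (vert φ y) ↔ (KK n m).Adj x y := by
  rw [← φ.symm.map_adj_iff]
  rfl

lemma vert_surj {v : V} (hv : v ∈ W) : ∃ x, vert φ x = v :=
  ⟨φ ⟨v, hv⟩, by simp [vert]⟩

variable (f : Fin (n+1) ↪ Fin (n+m+2)) (π : Equiv.Perm (Fin (n+2)))

/-- the complement of the range of `f`. -/
def CC : Finset (Fin (n+m+2)) := (Finset.univ.map f)ᶜ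

lemma card_CC : (CC f).card = m + 1 := by
  simp only [CC, Finset.card_compl, Finset.card_map, Finset.card_univ, Fintype.card_fin]
  omega

/-- the vertex set of the star. -/
def U1 : Finset V :=
  insert (vert φ (.inl (π 0))) ((CC f).image (fun j => vert φ (.inr j)))

/-- the `i`-th edge. -/
def edg (i : Fin (n+1)) : Sym2 V :=
  s(vert φ (.inl (π i.succ)), vert φ (.inr (f i)))

lemma edg_mem (i : Fin (n+1)) : edg φ f π i ∈ G.edgeSet := by
  rw [edg, SimpleGraph.mem_edgeSet, adj_vert]
  simp

/-- An equivalence between the complement and `Fin (m+1)`. -/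
def cEquiv : {x // x ∈ CC f} ≃ Fin (m+1) :=
  Fintype.equivFinOfCardEq (by rw [Fintype.card_coe, card_CC])

/-- The equivalence onto the star's vertex set. -/
def starFun : Fin 1 ⊕ Fin (m+1) → V
  | .inl _ => vert φ (.inl (π 0))
  | .inr j => vert φ (.inr ((cEquiv f).symm j : Fin (n+m+2)))

lemma starFun_mem (x) : starFun φ f π x ∈ U1 φ f π := by
  match x with
  | .inl _ => exact Finset.mem_insert_self _ _
  | .inr j =>
    refine Finset.mem_insert_of_mem (Finset.mem_image.2 ⟨_, ?_, rfl⟩)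
    exact ((cEquiv f).symm j).2

lemma starFun_inj : Function.Injective (starFun φ f π) := by
  intro x y h
  match x, y with
  | .inl a, .inl b => simp [Fin.eq_zero a, Fin.eq_zero b]
  | .inl a, .inr b => exact absurd (vert_inj φ h) (by simp)
  | .inr a, .inl b => exact absurd (vert_inj φ h) (by simp)
  | .inr a, .inr b =>
    have := Sum.inr_injective (vert_inj φ h)
    have := (cEquiv f).symm.injective (Subtype.ext this)
    exact congrArg Sum.inr this

lemma starFun_surj {v : V} (hv : v ∈ U1 φ f π) : ∃ x, starFun φ f π x = v := by
  rw [U1, Finset.mem_insert] at hv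
  rcases hv with h | h
  · exact ⟨.inl 0, h.symm⟩
  · obtain ⟨j, hj, rfl⟩ := Finset.mem_image.1 h
    refine ⟨.inr ((cEquiv f) ⟨j, hj⟩), ?_⟩
    simp [starFun]

/-- the star equivalence as an equiv onto the subtype. -/
def starEquiv : (Fin 1 ⊕ Fin (m+1)) ≃ ((U1 φ f π : Finset V) : Set V) :=
  Equiv.ofBijective (fun x => ⟨starFun φ f π x, starFun_mem φ f π x⟩)
    ⟨fun x y h => starFun_inj φ f π (congrArg Subtype.val h),
     fun ⟨v, hv⟩ => by
      obtain ⟨x, hx⟩ := starFun_surj φ f π hv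
      exact ⟨x, Subtype.ext hx⟩⟩

/-- the star isomorphism. -/
def starIso : SS m ≃g G.induce ((U1 φ f π : Finset V) : Set V) where
  toEquiv := starEquiv φ f π
  map_rel_iff' := by
    intro x y
    show G.Adj (starFun φ f π x) (starFun φ f π y) ↔ (SS m).Adj x y
    match x, y with
    | .inl a, .inl b => simp [starFun]
    | .inl a, .inr b => simp [starFun, adj_vert]
    | .inr a, .inl b => simp [starFun, adj_vert]
    | .inr a, .inr b => simp [starFun, adj_vert]

lemma union_eq :
    ((U1 φ f π : Finset V) : Set V) ∪ (⋃ i, {v | v ∈ edg φ f π i}) = (W : Set V) := by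
  apply Set.Subset.antisymm
  · rintro v (hv | hv)
    · rw [Finset.mem_coe, U1, Finset.mem_insert] at hv
      rcases hv with rfl | hv
      · exact vert_mem φ _
      · obtain ⟨j, _, rfl⟩ := Finset.mem_image.1 hv
        exact vert_mem φ _
    · obtain ⟨i, hi⟩ := Set.mem_iUnion.1 hv
      rw [Set.mem_setOf_eq, edg, Sym2.mem_iff] at hi
      rcases hi with rfl | rfl <;> exact vert_mem φ _
  · intro v hv
    obtain ⟨x, rfl⟩ := vert_surj φ hv
    match x with
    | .inl a =>
      rcases Fin.eq_zero_or_eq_succ (π.symm a) with h | ⟨i, h⟩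
      · left
        have : a = π 0 := by rw [← h]; simp
        rw [this]
        exact Finset.mem_insert_self _ _
      · right
        refine Set.mem_iUnion.2 ⟨i, ?_⟩
        have : a = π i.succ := by rw [← h]; simp
        rw [Set.mem_setOf_eq, edg, this, Sym2.mem_iff]
        exact Or.inl rfl
    | .inr b =>
      by_cases hb : b ∈ CC f
      · left
        exact Finset.mem_insert_of_mem (Finset.mem_image.2 ⟨b, hb, rfl⟩)
      · right
        rw [CC, Finset.mem_compl, not_not, Finset.mem_map] at hb
        obtain ⟨i, _, rfl⟩ := hb
        refine Set.mem_iUnion.2 ⟨i, ?_⟩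
        rw [Set.mem_setOf_eq, edg, Sym2.mem_iff]
        exact Or.inr rfl

end StmtAux

end StmtAux

open StmtAux in
theorem key (n m : ℕ) {V : Type*} [Fintype V] (G : SimpleGraph V) :
    (n+2).factorial * ((n+m+2).descFactorial (n+1)) *
      inducedCount (KK n m) G ≤
    inducedCount (SS m) G * G.edgeSet.ncard ^ (n+1) := by
  classical
  set A : Set (Finset V) := {s : Finset V | Nonempty (G.induce (s : Set V) ≃g KK n m)} with hA
  set B : Set (Finset V) := {s : Finset V | Nonempty (G.induce (s : Set V) ≃g SS m)} with hB
  let cho : ∀ a : A, G.induce ((a : Finset V) : Set V) ≃g KK n m := fun a => Classical.choice a.2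
  let Φ : A × Equiv.Perm (Fin (n+2)) × (Fin (n+1) ↪ Fin (n+m+2)) →
      B × (Fin (n+1) → G.edgeSet) :=
    fun p => (⟨U1 (cho p.1) p.2.2 p.2.1, ⟨(starIso (cho p.1) p.2.2 p.2.1).symm⟩⟩,
      fun i => ⟨edg (cho p.1) p.2.2 p.2.1 i, edg_mem (cho p.1) p.2.2 p.2.1 i⟩)
  have hΦ1 : ∀ p, ((Φ p).1 : Finset V) = U1 (cho p.1) p.2.2 p.2.1 := fun p => rfl
  have hΦ2 : ∀ p i, ((Φ p).2 i : Sym2 V) = edg (cho p.1) p.2.2 p.2.1 i := fun p i => rfl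
  have hinj : Function.Injective Φ := by
    intro p q h
    have h1 : ((p.1 : Finset V) : Set V) = ((q.1 : Finset V) : Set V) := by
      rw [← union_eq (cho p.1) p.2.2 p.2.1, ← union_eq (cho q.1) q.2.2 q.2.1]
      have hu : ((Φ p).1 : Finset V) = ((Φ q).1 : Finset V) := by rw [h]
      have he : ∀ i, ((Φ p).2 i : Sym2 V) = ((Φ q).2 i : Sym2 V) := fun i => by rw [h]
      rw [hΦ1, hΦ1] at hu
      have he' : ∀ i, edg (cho p.1) p.2.2 p.2.1 i = edg (cho q.1) q.2.2 q.2.1 i := by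
        intro i; rw [← hΦ2, ← hΦ2, he]
      rw [hu]
      congr 1
      ext v
      simp only [Set.mem_iUnion]
      exact ⟨fun ⟨i, hi⟩ => ⟨i, by rw [← he' i]; exact hi⟩,
             fun ⟨i, hi⟩ => ⟨i, by rw [he' i]; exact hi⟩⟩
    obtain ⟨⟨a, ha⟩, π, f⟩ := p
    obtain ⟨⟨b, hb⟩, π', f'⟩ := q
    simp only at h1
    have hab : a = b := Finset.coe_injective h1
    subst hab
    set φ := cho ⟨a, ha⟩ with hφ
    have hu : U1 φ f π = U1 φ f' π' := by
      have := congrArg (fun z => ((z.1 : Finset V)) ) h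
      simpa [Φ] using this
    have he : ∀ i, edg φ f π i = edg φ f' π' i := by
      intro i
      have := congrArg (fun z => ((z.2 i : Sym2 V))) h
      simpa [Φ] using this
    have hstep : ∀ i, π i.succ = π' i.succ ∧ f i = f' i := by
      intro i
      have hi := he i
      rw [edg, edg, Sym2.eq_iff] at hi
      rcases hi with ⟨hl, hr⟩ | ⟨hl, hr⟩
      · exact ⟨Sum.inl_injective (vert_inj φ hl), Sum.inr_injective (vert_inj φ hr)⟩
      · exact absurd (vert_inj φ hl) (by simp)
    have hf : f = f' := DFunLike.ext _ _ fun i => (hstep i).2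
    have h0 : π 0 = π' 0 := by
      have hm : vert φ (.inl (π 0)) ∈ U1 φ f' π' := hu ▸ Finset.mem_insert_self _ _
      rw [U1, Finset.mem_insert] at hm
      rcases hm with hm | hm
      · exact Sum.inl_injective (vert_inj φ hm)
      · obtain ⟨j, _, hj⟩ := Finset.mem_image.1 hm
        exact absurd (vert_inj φ hj.symm) (by simp)
    have hπ : π = π' := by
      apply Equiv.ext
      intro x
      rcases Fin.eq_zero_or_eq_succ x with rfl | ⟨i, rfl⟩
      · exact h0
      · exact (hstep i).1
    simp [hπ, hf]
  have hcard := Nat.card_le_card_of_injective Φ hinj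
  have e1 : Nat.card (A × Equiv.Perm (Fin (n+2)) × (Fin (n+1) ↪ Fin (n+m+2)))
      = inducedCount (KK n m) G * ((n+2).factorial * (n+m+2).descFactorial (n+1)) := by
    rw [Nat.card_prod, Nat.card_prod, Nat.card_coe_set_eq,
      Nat.card_eq_fintype_card (α := Equiv.Perm (Fin (n+2))),
      Nat.card_eq_fintype_card (α := Fin (n+1) ↪ Fin (n+m+2)),
      Fintype.card_perm, Fintype.card_embedding_eq, Fintype.card_fin, Fintype.card_fin,
      Fintype.card_fin]
    rfl
  have e2 : Nat.card (B × (Fin (n+1) → G.edgeSet))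
      = inducedCount (SS m) G * G.edgeSet.ncard ^ (n+1) := by
    rw [Nat.card_prod, Nat.card_fun, Nat.card_coe_set_eq, Nat.card_coe_set_eq,
      Nat.card_eq_fintype_card (α := Fin (n+1)), Fintype.card_fin]
    rfl
  rw [e1, e2] at hcard
  calc (n+2).factorial * ((n+m+2).descFactorial (n+1)) * inducedCount (KK n m) G
      = inducedCount (KK n m) G * ((n+2).factorial * (n+m+2).descFactorial (n+1)) := by ring
    _ ≤ _ := hcard

theorem stmt4 (s t : ℕ) (hs : 2 ≤ s) (hst : s ≤ t)
    {V : Type*} [Fintype V] (G : SimpleGraph V) :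
    (inducedCount (completeBipartiteGraph (Fin s) (Fin t)) G : ℝ) ≤
      ((t - s + 1).factorial : ℝ) / ((s.factorial : ℝ) * (t.factorial : ℝ)) *
        (inducedCount (completeBipartiteGraph (Fin 1) (Fin (t - s + 1))) G : ℝ) *
        (G.edgeSet.ncard : ℝ) ^ (s - 1) := by
  obtain ⟨n, rfl⟩ : ∃ n, s = n + 2 := ⟨s - 2, by omega⟩
  obtain ⟨m, rfl⟩ : ∃ m, t = n + m + 2 := ⟨t - (n + 2), by omega⟩
  have h1 : n + m + 2 - (n + 2) + 1 = m + 1 := by omega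
  have h2 : n + 2 - 1 = n + 1 := by omega
  rw [h1, h2]
  have hk : (((n+2).factorial * ((n+m+2).descFactorial (n+1)) : ℕ) : ℝ) *
      (inducedCount (completeBipartiteGraph (Fin (n+2)) (Fin (n+m+2))) G : ℝ) ≤
      (inducedCount (completeBipartiteGraph (Fin 1) (Fin (m+1))) G : ℝ) *
      (G.edgeSet.ncard : ℝ) ^ (n+1) := by
    exact_mod_cast key n m G
  have hD : ((m+1).factorial : ℝ) * ((n+m+2).descFactorial (n+1) : ℝ) =
      ((n+m+2).factorial : ℝ) := by
    have h3 : n + m + 2 - (n + 1) = m + 1 := by omega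
    have := Nat.factorial_mul_descFactorial (show n + 1 ≤ n + m + 2 by omega)
    rw [h3] at this
    exact_mod_cast this
  set NK := (inducedCount (completeBipartiteGraph (Fin (n+2)) (Fin (n+m+2))) G : ℝ)
  set NS := (inducedCount (completeBipartiteGraph (Fin 1) (Fin (m+1))) G : ℝ)
  set E := (G.edgeSet.ncard : ℝ) ^ (n+1)
  set D := ((n+m+2).descFactorial (n+1) : ℝ)
  have hk' : ((n+2).factorial : ℝ) * D * NK ≤ NS * E := by
    push_cast at hk
    linarith [hk]
  rw [← hD]
  have fp1 : (0:ℝ) < ((n+2).factorial : ℝ) := by exact_mod_cast (n+2).factorial_pos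
  have fp2 : (0:ℝ) < ((m+1).factorial : ℝ) := by exact_mod_cast (m+1).factorial_pos
  have fp3 : (0:ℝ) < ((n+m+2).factorial : ℝ) := by exact_mod_cast (n+m+2).factorial_pos
  have hDpos : 0 < D := by nlinarith
  rw [div_mul_eq_mul_div, div_mul_eq_mul_div, le_div_iff₀ (by positivity)]
  calc NK * (((n+2).factorial : ℝ) * (((m+1).factorial : ℝ) * D))
      = ((m+1).factorial : ℝ) * (((n+2).factorial : ℝ) * D * NK) := by ring
    _ ≤ ((m+1).factorial : ℝ) * (NS * E) := mul_le_mul_of_nonneg_left hk' (le_of_lt fp2)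
    _ = ((m+1).factorial : ℝ) * NS * E := by ring
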